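/- Let M be an Orlicz function and 1 ≤ p < ∞. Then C_p(M) = { real sequences x = (x_k)_{k≥1} : there exists ρ > 0 with Σ_{i=1}^∞ ((1/i) Σ_{k=1}^{i} M(|x_k|/ρ))^p < ∞ } is a complete metric space with respect to the metric η₁(x,y) = inf{ ρ > 0 : (Σ_{i=1}^∞ ((1/i) Σ_{k=1}^{i} M(|x_k − y_k|/ρ))^p)^{1/p} ≤ 1 }. -/

import Mathlib

/-!
Statement 3 (Paper: Lemma 2.2(i)).  `C_p(M)` is a complete metric space with
respect to the metric `η₁`.  Sequences are indexed so that `x k` represents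
the paper's `x_{k+1}` (i.e. indices start at 1 in the paper).
-/

open scoped ENNReal

/-- An Orlicz function: continuous, non-decreasing and convex on `[0,∞)`,
with `M 0 = 0`, `M x > 0` for `x > 0` and `M x → ∞` as `x → ∞`. -/
def IsOrliczFunction (M : ℝ → ℝ) : Prop :=
  ContinuousOn M (Set.Ici 0) ∧ MonotoneOn M (Set.Ici 0) ∧ ConvexOn ℝ (Set.Ici 0) M ∧
    M 0 = 0 ∧ (∀ x : ℝ, 0 < x → 0 < M x) ∧ Filter.Tendsto M Filter.atTop Filter.atTop

/-- The Cesàro average `(1/i) ∑_{k=1}^{i} M (|x_k| / ρ)`, where `i` here is `i+1`. -/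
noncomputable def cesTerm (M : ℝ → ℝ) (x : ℕ → ℝ) (ρ : ℝ) (i : ℕ) : ℝ :=
  (1 / (i + 1 : ℝ)) * ∑ k ∈ Finset.range (i + 1), M (|x k| / ρ)

/-- `∑_{i=1}^∞ ((1/i) ∑_{k=1}^{i} M(|x_k|/ρ))^p`, valued in `ℝ≥0∞`. -/
noncomputable def cesaroSum (M : ℝ → ℝ) (p : ℝ) (x : ℕ → ℝ) (ρ : ℝ) : ℝ≥0∞ :=
  ∑' i : ℕ, ENNReal.ofReal (cesTerm M x ρ i) ^ p

/-- The space `C_p(M)`. -/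
def CpM (M : ℝ → ℝ) (p : ℝ) : Set (ℕ → ℝ) :=
  {x | ∃ ρ > 0, cesaroSum M p x ρ < ⊤}

/-- The metric `η₁`. -/
noncomputable def eta1 (M : ℝ → ℝ) (p : ℝ) (x y : ℕ → ℝ) : ℝ :=
  sInf {ρ : ℝ | 0 < ρ ∧ (cesaroSum M p (fun k => x k - y k) ρ) ^ (1 / p) ≤ 1}


namespace CpAux

variable {M : ℝ → ℝ} {p : ℝ}

theorem M_nonneg (hM : IsOrliczFunction M) {t : ℝ} (ht : 0 ≤ t) : 0 ≤ M t := by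
  have h := hM.2.1 Set.self_mem_Ici (Set.mem_Ici.mpr ht) ht
  rw [hM.2.2.2.1] at h
  exact h

theorem M_scale (hM : IsOrliczFunction M) {c t : ℝ} (hc0 : 0 ≤ c) (hc1 : c ≤ 1) (ht : 0 ≤ t) :
    M (c * t) ≤ c * M t := by
  have h := hM.2.2.1.2 Set.self_mem_Ici (Set.mem_Ici.mpr ht)
      (by linarith : (0:ℝ) ≤ 1 - c) hc0 (by ring)
  simp only [smul_eq_mul, mul_zero, zero_add] at h
  rw [hM.2.2.2.1] at h
  linarith

theorem M_split (hM : IsOrliczFunction M) {a b ρ σ : ℝ} (ha : 0 ≤ a) (hb : 0 ≤ b)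
    (hρ : 0 < ρ) (hσ : 0 < σ) :
    M ((a + b) / (ρ + σ)) ≤ ρ / (ρ + σ) * M (a / ρ) + σ / (ρ + σ) * M (b / σ) := by
  have hρσ : 0 < ρ + σ := by linarith
  have h := hM.2.2.1.2 (Set.mem_Ici.mpr (div_nonneg ha hρ.le))
      (Set.mem_Ici.mpr (div_nonneg hb hσ.le))
      (div_nonneg hρ.le hρσ.le) (div_nonneg hσ.le hρσ.le)
      (by field_simp)
  have e1 : ρ / (ρ + σ) * (a / ρ) = a / (ρ + σ) := by
    rw [div_mul_div_comm, mul_comm ρ a, mul_div_mul_right a (ρ + σ) hρ.ne']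
  have e2 : σ / (ρ + σ) * (b / σ) = b / (ρ + σ) := by
    rw [div_mul_div_comm, mul_comm σ b, mul_div_mul_right b (ρ + σ) hσ.ne']
  simp only [smul_eq_mul] at h
  rw [e1, e2, ← add_div] at h
  exact h

theorem cesTerm_nonneg (hM : IsOrliczFunction M) {x : ℕ → ℝ} {ρ : ℝ} (hρ : 0 < ρ) (i : ℕ) :
    0 ≤ cesTerm M x ρ i := by
  apply mul_nonneg (by positivity)
  exact Finset.sum_nonneg fun k _ => M_nonneg hM (by positivity)

theorem cesTerm_anti (hM : IsOrliczFunction M) {x : ℕ → ℝ} {ρ ρ' : ℝ} (hρ : 0 < ρ)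
    (hle : ρ ≤ ρ') (i : ℕ) : cesTerm M x ρ' i ≤ cesTerm M x ρ i := by
  have hρ' : 0 < ρ' := lt_of_lt_of_le hρ hle
  refine mul_le_mul_of_nonneg_left (Finset.sum_le_sum fun k _ => ?_) (by positivity)
  refine hM.2.1 (Set.mem_Ici.mpr (by positivity)) (Set.mem_Ici.mpr (by positivity)) ?_
  exact div_le_div_of_nonneg_left (abs_nonneg _) hρ hle

theorem rpow_inv_le_one_iff {x : ℝ≥0∞} (hp0 : 0 < p) : x ^ (1 / p) ≤ 1 ↔ x ≤ 1 := by
  constructor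
  · intro h
    have h2 := ENNReal.rpow_le_rpow h hp0.le
    rwa [← ENNReal.rpow_mul, one_div, inv_mul_cancel₀ hp0.ne', ENNReal.rpow_one,
      ENNReal.one_rpow] at h2
  · intro h
    exact ENNReal.rpow_le_one h (by positivity)

theorem rpow_inv_rpow {x : ℝ≥0∞} (hp0 : 0 < p) : (x ^ (1 / p)) ^ p = x := by
  rw [← ENNReal.rpow_mul, one_div, inv_mul_cancel₀ hp0.ne', ENNReal.rpow_one]

theorem rpow_rpow_inv {x : ℝ≥0∞} (hp0 : 0 < p) : (x ^ p) ^ (1 / p) = x := by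
  rw [← ENNReal.rpow_mul, mul_one_div, div_self hp0.ne', ENNReal.rpow_one]

theorem Lp_tsum_add_le (f g : ℕ → ℝ≥0∞) (hp : 1 ≤ p) :
    (∑' i, (f i + g i) ^ p) ^ (1 / p) ≤
      (∑' i, f i ^ p) ^ (1 / p) + (∑' i, g i ^ p) ^ (1 / p) := by
  have hp0 : 0 < p := lt_of_lt_of_le one_pos hp
  set B := (∑' i, f i ^ p) ^ (1 / p) + (∑' i, g i ^ p) ^ (1 / p) with hB
  have key : (∑' i, (f i + g i) ^ p) ≤ B ^ p := by
    rw [ENNReal.tsum_eq_iSup_sum]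
    refine iSup_le fun s => ?_
    have h1 := ENNReal.Lp_add_le s f g hp
    have h2 : (∑ i ∈ s, (f i + g i) ^ p) =
        ((∑ i ∈ s, (f i + g i) ^ p) ^ (1 / p)) ^ p := (rpow_inv_rpow hp0).symm
    rw [h2]
    refine ENNReal.rpow_le_rpow (h1.trans ?_) hp0.le
    refine add_le_add ?_ ?_ <;>
      exact ENNReal.rpow_le_rpow (ENNReal.sum_le_tsum s) (by positivity)
  calc (∑' i, (f i + g i) ^ p) ^ (1 / p) ≤ (B ^ p) ^ (1 / p) :=
        ENNReal.rpow_le_rpow key (by positivity)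
    _ = B := rpow_rpow_inv hp0

theorem cesaroSum_anti (hM : IsOrliczFunction M) (hp0 : 0 < p) {x : ℕ → ℝ} {ρ ρ' : ℝ}
    (hρ : 0 < ρ) (hle : ρ ≤ ρ') : cesaroSum M p x ρ' ≤ cesaroSum M p x ρ :=
  ENNReal.tsum_le_tsum fun i =>
    ENNReal.rpow_le_rpow (ENNReal.ofReal_le_ofReal (cesTerm_anti hM hρ hle i)) hp0.le

theorem cesaroSum_congr {d e : ℕ → ℝ} (h : ∀ k, |d k| = |e k|) (ρ : ℝ) :
    cesaroSum M p d ρ = cesaroSum M p e ρ := by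
  unfold cesaroSum cesTerm
  simp only [h]

theorem cesaroSum_add_le (hM : IsOrliczFunction M) (hp : 1 ≤ p) (d e : ℕ → ℝ) {ρ σ : ℝ}
    (hρ : 0 < ρ) (hσ : 0 < σ) :
    (cesaroSum M p (fun k => d k + e k) (ρ + σ)) ^ (1 / p) ≤
      ENNReal.ofReal (ρ / (ρ + σ)) * (cesaroSum M p d ρ) ^ (1 / p) +
        ENNReal.ofReal (σ / (ρ + σ)) * (cesaroSum M p e σ) ^ (1 / p) := by
  have hp0 : 0 < p := lt_of_lt_of_le one_pos hp
  have hρσ : 0 < ρ + σ := by linarith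
  have hpt : ∀ i, cesTerm M (fun k => d k + e k) (ρ + σ) i ≤
      ρ / (ρ + σ) * cesTerm M d ρ i + σ / (ρ + σ) * cesTerm M e σ i := by
    intro i
    have hsum : ∑ k ∈ Finset.range (i + 1), M (|d k + e k| / (ρ + σ)) ≤
        ∑ k ∈ Finset.range (i + 1),
          (ρ / (ρ + σ) * M (|d k| / ρ) + σ / (ρ + σ) * M (|e k| / σ)) := by
      refine Finset.sum_le_sum fun k _ => ?_
      have h1 : M (|d k + e k| / (ρ + σ)) ≤ M ((|d k| + |e k|) / (ρ + σ)) := by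
        refine hM.2.1 (Set.mem_Ici.mpr (by positivity)) (Set.mem_Ici.mpr (by positivity)) ?_
        gcongr
        exact abs_add_le _ _
      exact h1.trans (M_split hM (abs_nonneg _) (abs_nonneg _) hρ hσ)
    calc cesTerm M (fun k => d k + e k) (ρ + σ) i
        ≤ (1 / (i + 1 : ℝ)) * ∑ k ∈ Finset.range (i + 1),
            (ρ / (ρ + σ) * M (|d k| / ρ) + σ / (ρ + σ) * M (|e k| / σ)) :=
          mul_le_mul_of_nonneg_left hsum (by positivity)
      _ = ρ / (ρ + σ) * cesTerm M d ρ i + σ / (ρ + σ) * cesTerm M e σ i := by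
          unfold cesTerm
          rw [Finset.sum_add_distrib, ← Finset.mul_sum, ← Finset.mul_sum]
          ring
  set F : ℕ → ℝ≥0∞ := fun i => ENNReal.ofReal (ρ / (ρ + σ)) * ENNReal.ofReal (cesTerm M d ρ i)
    with hF
  set G : ℕ → ℝ≥0∞ := fun i => ENNReal.ofReal (σ / (ρ + σ)) * ENNReal.ofReal (cesTerm M e σ i)
    with hG
  have hterm : ∀ i,
      ENNReal.ofReal (cesTerm M (fun k => d k + e k) (ρ + σ) i) ≤ F i + G i := by
    intro i
    refine le_trans (ENNReal.ofReal_le_ofReal (hpt i)) ?_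
    refine le_trans ENNReal.ofReal_add_le ?_
    rw [ENNReal.ofReal_mul (by positivity), ENNReal.ofReal_mul (by positivity)]
  have h1 : cesaroSum M p (fun k => d k + e k) (ρ + σ) ≤ ∑' i, (F i + G i) ^ p :=
    ENNReal.tsum_le_tsum fun i => ENNReal.rpow_le_rpow (hterm i) hp0.le
  have hFsum : (∑' i, F i ^ p) ^ (1 / p) =
      ENNReal.ofReal (ρ / (ρ + σ)) * (cesaroSum M p d ρ) ^ (1 / p) := by
    simp only [hF, ENNReal.mul_rpow_of_nonneg _ _ hp0.le]
    rw [ENNReal.tsum_mul_left, ENNReal.mul_rpow_of_nonneg _ _ (by positivity : (0:ℝ) ≤ 1 / p),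
      rpow_rpow_inv hp0]
    rfl
  have hGsum : (∑' i, G i ^ p) ^ (1 / p) =
      ENNReal.ofReal (σ / (ρ + σ)) * (cesaroSum M p e σ) ^ (1 / p) := by
    simp only [hG, ENNReal.mul_rpow_of_nonneg _ _ hp0.le]
    rw [ENNReal.tsum_mul_left, ENNReal.mul_rpow_of_nonneg _ _ (by positivity : (0:ℝ) ≤ 1 / p),
      rpow_rpow_inv hp0]
    rfl
  calc (cesaroSum M p (fun k => d k + e k) (ρ + σ)) ^ (1 / p)
      ≤ (∑' i, (F i + G i) ^ p) ^ (1 / p) := ENNReal.rpow_le_rpow h1 (by positivity)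
    _ ≤ (∑' i, F i ^ p) ^ (1 / p) + (∑' i, G i ^ p) ^ (1 / p) := Lp_tsum_add_le F G hp
    _ = _ := by rw [hFsum, hGsum]

/-- The defining set of `eta1`. -/
def S (M : ℝ → ℝ) (p : ℝ) (d : ℕ → ℝ) : Set ℝ :=
  {ρ : ℝ | 0 < ρ ∧ (cesaroSum M p d ρ) ^ (1 / p) ≤ 1}

theorem S_bddBelow {d : ℕ → ℝ} : BddBelow (S M p d) :=
  ⟨0, fun _ hρ => hρ.1.le⟩

theorem S_mono (hM : IsOrliczFunction M) (hp0 : 0 < p) {d : ℕ → ℝ} {ρ ρ' : ℝ}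
    (h : ρ ∈ S M p d) (hle : ρ ≤ ρ') : ρ' ∈ S M p d :=
  ⟨lt_of_lt_of_le h.1 hle,
    le_trans (ENNReal.rpow_le_rpow (cesaroSum_anti hM hp0 h.1 hle) (by positivity)) h.2⟩

theorem S_add_mem (hM : IsOrliczFunction M) (hp : 1 ≤ p) {d e : ℕ → ℝ} {ρ σ : ℝ}
    (hd : ρ ∈ S M p d) (he : σ ∈ S M p e) : ρ + σ ∈ S M p (fun k => d k + e k) := by
  obtain ⟨hρ0, hρ1⟩ := hd
  obtain ⟨hσ0, hσ1⟩ := he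
  have hρσ : (0:ℝ) < ρ + σ := by linarith
  refine ⟨hρσ, ?_⟩
  refine (cesaroSum_add_le hM hp d e hρ0 hσ0).trans ?_
  calc ENNReal.ofReal (ρ / (ρ + σ)) * (cesaroSum M p d ρ) ^ (1 / p) +
        ENNReal.ofReal (σ / (ρ + σ)) * (cesaroSum M p e σ) ^ (1 / p)
      ≤ ENNReal.ofReal (ρ / (ρ + σ)) * 1 + ENNReal.ofReal (σ / (ρ + σ)) * 1 := by gcongr
    _ = ENNReal.ofReal (ρ / (ρ + σ) + σ / (ρ + σ)) := by
        rw [mul_one, mul_one, ENNReal.ofReal_add (by positivity) (by positivity)]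
    _ ≤ 1 := by
        rw [← add_div, div_self hρσ.ne']
        simp

theorem cesaroSum_add_lt_top (hM : IsOrliczFunction M) (hp : 1 ≤ p) {d e : ℕ → ℝ} {ρ σ : ℝ}
    (hρ : 0 < ρ) (hσ : 0 < σ) (hd : cesaroSum M p d ρ < ⊤) (he : cesaroSum M p e σ < ⊤) :
    cesaroSum M p (fun k => d k + e k) (ρ + σ) < ⊤ := by
  have hp0 : 0 < p := lt_of_lt_of_le one_pos hp
  have h := cesaroSum_add_le hM hp d e hρ hσ
  have hrhs : ENNReal.ofReal (ρ / (ρ + σ)) * (cesaroSum M p d ρ) ^ (1 / p) +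
      ENNReal.ofReal (σ / (ρ + σ)) * (cesaroSum M p e σ) ^ (1 / p) < ⊤ := by
    refine ENNReal.add_lt_top.mpr ⟨?_, ?_⟩ <;>
      exact ENNReal.mul_lt_top ENNReal.ofReal_lt_top
        (ENNReal.rpow_lt_top_of_nonneg (by positivity) (by first | exact hd.ne | exact he.ne))
  have h2 : (cesaroSum M p (fun k => d k + e k) (ρ + σ)) ^ (1 / p) < ⊤ := lt_of_le_of_lt h hrhs
  have h3 : cesaroSum M p (fun k => d k + e k) (ρ + σ) =
      ((cesaroSum M p (fun k => d k + e k) (ρ + σ)) ^ (1 / p)) ^ p := (rpow_inv_rpow hp0).symm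
  rw [h3]
  exact ENNReal.rpow_lt_top_of_nonneg hp0.le h2.ne

theorem exists_le_one (hM : IsOrliczFunction M) (hp : 1 ≤ p) {d : ℕ → ℝ} {ρ : ℝ}
    (hρ : 0 < ρ) (hfin : cesaroSum M p d ρ < ⊤) :
    ∃ σ > 0, (cesaroSum M p d σ) ^ (1 / p) ≤ 1 := by
  have hp0 : 0 < p := lt_of_lt_of_le one_pos hp
  obtain ⟨n, hn⟩ := ENNReal.exists_nat_gt hfin.ne
  set c : ℝ := 1 / ((n : ℝ) + 1) with hc
  have hc0 : 0 < c := by positivity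
  have hc1 : c ≤ 1 := by
    rw [hc, div_le_one (by positivity)]
    linarith [show (0:ℝ) ≤ (n:ℝ) by positivity]
  refine ⟨((n : ℝ) + 1) * ρ, by positivity, ?_⟩
  rw [rpow_inv_le_one_iff hp0]
  have hpt : ∀ i, cesTerm M d (((n : ℝ) + 1) * ρ) i ≤ c * cesTerm M d ρ i := by
    intro i
    have hstep : ∀ k : ℕ, M (|d k| / (((n : ℝ) + 1) * ρ)) ≤ c * M (|d k| / ρ) := by
      intro k
      have harg : |d k| / (((n : ℝ) + 1) * ρ) = c * (|d k| / ρ) := by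
        rw [hc]
        field_simp
      rw [harg]
      exact M_scale hM hc0.le hc1 (by positivity)
    calc cesTerm M d (((n : ℝ) + 1) * ρ) i
        ≤ (1 / (i + 1 : ℝ)) * ∑ k ∈ Finset.range (i + 1), c * M (|d k| / ρ) :=
          mul_le_mul_of_nonneg_left (Finset.sum_le_sum fun k _ => hstep k) (by positivity)
      _ = c * cesTerm M d ρ i := by
          unfold cesTerm
          rw [← Finset.mul_sum]
          ring
  have hsum : cesaroSum M p d (((n : ℝ) + 1) * ρ) ≤
      ENNReal.ofReal c ^ p * cesaroSum M p d ρ := by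
    unfold cesaroSum
    rw [← ENNReal.tsum_mul_left]
    refine ENNReal.tsum_le_tsum fun i => ?_
    rw [← ENNReal.mul_rpow_of_nonneg _ _ hp0.le, ← ENNReal.ofReal_mul hc0.le]
    exact ENNReal.rpow_le_rpow (ENNReal.ofReal_le_ofReal (hpt i)) hp0.le
  have hcle : ENNReal.ofReal c ^ p ≤ ENNReal.ofReal c := by
    have h1 : ENNReal.ofReal c ≤ 1 := ENNReal.ofReal_le_one.mpr hc1
    calc ENNReal.ofReal c ^ p ≤ ENNReal.ofReal c ^ (1 : ℝ) :=
          ENNReal.rpow_le_rpow_of_exponent_ge h1 hp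
      _ = ENNReal.ofReal c := ENNReal.rpow_one _
  have hfin2 : cesaroSum M p d ρ ≤ ((n : ℝ≥0∞) + 1) := le_trans hn.le (by
    norm_num)
  calc cesaroSum M p d (((n : ℝ) + 1) * ρ) ≤ ENNReal.ofReal c * cesaroSum M p d ρ := by
        exact le_trans hsum (mul_le_mul_left hcle _)
    _ ≤ ENNReal.ofReal c * ((n : ℝ≥0∞) + 1) := mul_le_mul_right hfin2 _
    _ = 1 := by
        rw [hc, ENNReal.ofReal_div_of_pos (by positivity), ENNReal.ofReal_one]
        rw [ENNReal.ofReal_add (by positivity) zero_le_one, ENNReal.ofReal_natCast,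
          ENNReal.ofReal_one]
        rw [ENNReal.div_mul_cancel (lt_of_lt_of_le one_pos le_add_self).ne'
          (ENNReal.add_ne_top.mpr ⟨ENNReal.natCast_ne_top n, ENNReal.one_ne_top⟩)]

theorem M_le_of_cesaroSum_le_one (hM : IsOrliczFunction M) (hp : 1 ≤ p) {d : ℕ → ℝ} {ρ : ℝ}
    (hρ : 0 < ρ) (h1 : cesaroSum M p d ρ ≤ 1) (k : ℕ) : M (|d k| / ρ) ≤ (k : ℝ) + 1 := by
  have hp0 : 0 < p := lt_of_lt_of_le one_pos hp
  have ht : ENNReal.ofReal (cesTerm M d ρ k) ^ p ≤ 1 := le_trans (ENNReal.le_tsum k) h1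
  have h2 : ENNReal.ofReal (cesTerm M d ρ k) ≤ 1 := by
    have h3 := ENNReal.rpow_le_rpow ht (by positivity : (0:ℝ) ≤ 1 / p)
    rwa [rpow_rpow_inv hp0, ENNReal.one_rpow] at h3
  have h3 : cesTerm M d ρ k ≤ 1 := ENNReal.ofReal_le_one.mp h2
  have hk : (0:ℝ) < (k : ℝ) + 1 := by positivity
  have h4 : ∑ j ∈ Finset.range (k + 1), M (|d j| / ρ) ≤ (k : ℝ) + 1 := by
    rw [cesTerm, one_div, inv_mul_eq_div, div_le_one hk] at h3
    exact le_trans h3 (by norm_num)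
  have h5 : M (|d k| / ρ) ≤ ∑ j ∈ Finset.range (k + 1), M (|d j| / ρ) :=
    Finset.single_le_sum (f := fun j => M (|d j| / ρ))
      (fun j _ => M_nonneg hM (by positivity)) (Finset.self_mem_range_succ k)
  linarith

theorem exists_X (hM : IsOrliczFunction M) (C : ℝ) :
    ∃ X > 0, ∀ t, 0 ≤ t → M t ≤ C → t ≤ X := by
  obtain ⟨X, hX⟩ := (Filter.tendsto_atTop.mp hM.2.2.2.2.2 (C + 1)).exists_forall_of_atTop
  refine ⟨max X 1, lt_of_lt_of_le one_pos (le_max_right _ _), fun t ht hMt => ?_⟩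
  by_contra hcon
  push_neg at hcon
  have h1 := hX t (le_of_lt (lt_of_le_of_lt (le_max_left _ _) hcon))
  linarith

theorem cesaroSum_le_of_tendsto (hM : IsOrliczFunction M) (hp0 : 0 < p) {d : ℕ → ℝ}
    {dm : ℕ → ℕ → ℝ} {ρ : ℝ} (hρ : 0 < ρ)
    (hconv : ∀ k, Filter.Tendsto (fun m => dm m k) Filter.atTop (nhds (d k)))
    (hbound : ∀ᶠ m in Filter.atTop, cesaroSum M p (dm m) ρ ≤ 1) :
    cesaroSum M p d ρ ≤ 1 := by
  have hterm : ∀ i, Filter.Tendsto (fun m => ENNReal.ofReal (cesTerm M (dm m) ρ i) ^ p)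
      Filter.atTop (nhds (ENNReal.ofReal (cesTerm M d ρ i) ^ p)) := by
    intro i
    have h1 : ∀ k, Filter.Tendsto (fun m => M (|dm m k| / ρ)) Filter.atTop
        (nhds (M (|d k| / ρ))) := by
      intro k
      have h2 : Filter.Tendsto (fun m => |dm m k| / ρ) Filter.atTop (nhds (|d k| / ρ)) :=
        ((hconv k).abs).div_const ρ
      have h3 := (hM.1 _ (Set.mem_Ici.mpr (by positivity : (0:ℝ) ≤ |d k| / ρ))).tendsto
      exact h3.comp (tendsto_nhdsWithin_of_tendsto_nhds_of_eventually_within _ h2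
        (Filter.Eventually.of_forall fun m => Set.mem_Ici.mpr (by positivity)))
    have h4 : Filter.Tendsto (fun m => cesTerm M (dm m) ρ i) Filter.atTop
        (nhds (cesTerm M d ρ i)) := by
      unfold cesTerm
      exact ((tendsto_finset_sum _ fun k _ => h1 k).const_mul _)
    exact (ENNReal.continuous_rpow_const.tendsto _).comp
      ((ENNReal.continuous_ofReal.tendsto _).comp h4)
  rw [cesaroSum, ENNReal.tsum_eq_iSup_sum]
  refine iSup_le fun s => ?_
  have hsum : Filter.Tendsto (fun m => ∑ i ∈ s, ENNReal.ofReal (cesTerm M (dm m) ρ i) ^ p)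
      Filter.atTop (nhds (∑ i ∈ s, ENNReal.ofReal (cesTerm M d ρ i) ^ p)) :=
    tendsto_finset_sum _ fun i _ => hterm i
  refine le_of_tendsto hsum ?_
  filter_upwards [hbound] with m hm
  exact (ENNReal.sum_le_tsum s).trans hm

theorem abs_coord_le (hM : IsOrliczFunction M) (hp : 1 ≤ p) {d : ℕ → ℝ}
    (hne : (S M p d).Nonempty) {k : ℕ} {X : ℝ} (hX : 0 < X)
    (hXspec : ∀ t, 0 ≤ t → M t ≤ (k : ℝ) + 1 → t ≤ X) :
    |d k| ≤ X * sInf (S M p d) := by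
  have hp0 : 0 < p := lt_of_lt_of_le one_pos hp
  rw [← div_le_iff₀' hX]
  refine le_csInf hne fun ρ hρ => ?_
  obtain ⟨hρ0, hρ1⟩ := hρ
  rw [rpow_inv_le_one_iff hp0] at hρ1
  have h1 := M_le_of_cesaroSum_le_one hM hp hρ0 hρ1 k
  have h2 : |d k| / ρ ≤ X := hXspec _ (by positivity) h1
  rw [div_le_iff₀ hρ0] at h2
  rw [div_le_iff₀ hX]
  linarith

end CpAux

namespace CpAux

variable {M : ℝ → ℝ} {p : ℝ}

theorem eta1_eq (x y : ℕ → ℝ) : eta1 M p x y = sInf (S M p (fun k => x k - y k)) := rfl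

theorem diff_lt_top (hM : IsOrliczFunction M) (hp : 1 ≤ p) {x y : ℕ → ℝ}
    (hx : x ∈ CpM M p) (hy : y ∈ CpM M p) :
    ∃ ρ > 0, cesaroSum M p (fun k => x k - y k) ρ < ⊤ := by
  obtain ⟨ρx, hρx, hfx⟩ := hx
  obtain ⟨ρy, hρy, hfy⟩ := hy
  have hneg : cesaroSum M p (fun k => -(y k)) ρy < ⊤ := by
    rwa [cesaroSum_congr (fun k => abs_neg (y k)) ρy]
  have h := cesaroSum_add_lt_top hM hp hρx hρy hfx hneg
  refine ⟨ρx + ρy, by linarith, ?_⟩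
  have heq : (fun k => x k + -(y k)) = fun k => x k - y k := by
    funext k; ring
  rwa [heq] at h

theorem S_nonempty (hM : IsOrliczFunction M) (hp : 1 ≤ p) {x y : ℕ → ℝ}
    (hx : x ∈ CpM M p) (hy : y ∈ CpM M p) :
    (S M p (fun k => x k - y k)).Nonempty := by
  obtain ⟨ρ, hρ, hfin⟩ := diff_lt_top hM hp hx hy
  obtain ⟨σ, hσ, hle⟩ := exists_le_one hM hp hρ hfin
  exact ⟨σ, hσ, hle⟩

theorem eta1_nonneg (x y : ℕ → ℝ) : 0 ≤ eta1 M p x y :=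
  Real.sInf_nonneg fun _ hρ => hρ.1.le

theorem eta1_self (hM : IsOrliczFunction M) (hp : 1 ≤ p) (x : ℕ → ℝ) :
    eta1 M p x x = 0 := by
  have hp0 : 0 < p := lt_of_lt_of_le one_pos hp
  have hS : ∀ ρ : ℝ, 0 < ρ → ρ ∈ S M p (fun k => x k - x k) := by
    intro ρ hρ
    refine ⟨hρ, ?_⟩
    have hzero : cesaroSum M p (fun k => x k - x k) ρ = 0 := by
      unfold cesaroSum cesTerm
      have : ∀ i : ℕ, ENNReal.ofReal ((1 / (i + 1 : ℝ)) *
          ∑ k ∈ Finset.range (i + 1), M (|x k - x k| / ρ)) ^ p = 0 := by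
        intro i
        simp only [sub_self, abs_zero, zero_div, hM.2.2.2.1, Finset.sum_const_zero, mul_zero,
          ENNReal.ofReal_zero]
        exact ENNReal.zero_rpow_of_pos hp0
      simp only [this, tsum_zero]
    rw [hzero, ENNReal.zero_rpow_of_pos (by positivity)]
    exact zero_le_one
  refine le_antisymm ?_ (eta1_nonneg x x)
  by_contra hcon
  push_neg at hcon
  rw [eta1_eq] at hcon
  have h1 := csInf_le S_bddBelow (hS (sInf (S M p fun k => x k - x k) / 2) (by linarith))
  linarith [h1]

theorem eta1_comm (x y : ℕ → ℝ) : eta1 M p x y = eta1 M p y x := by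
  rw [eta1_eq, eta1_eq]
  congr 1
  ext ρ
  unfold S
  rw [Set.mem_setOf_eq, Set.mem_setOf_eq,
    cesaroSum_congr (fun k => abs_sub_comm (x k) (y k)) ρ]

end CpAux


open CpAux in
theorem Cp_complete_metric (M : ℝ → ℝ) (hM : IsOrliczFunction M) (p : ℝ) (hp : 1 ≤ p) :
    ∃ inst : MetricSpace (CpM M p),
      (∀ a b : CpM M p, @dist _ inst.toDist a b = eta1 M p a.1 b.1) ∧
        @CompleteSpace _ inst.toUniformSpace := by
  classical
  have hp0 : 0 < p := lt_of_lt_of_le one_pos hp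
  -- triangle inequality
  have htri : ∀ a b c : CpM M p, eta1 M p a.1 c.1 ≤ eta1 M p a.1 b.1 + eta1 M p b.1 c.1 := by
    intro a b c
    have hne1 := S_nonempty hM hp a.2 b.2
    have hne2 := S_nonempty hM hp b.2 c.2
    refine le_of_forall_pos_le_add fun ε hε => ?_
    obtain ⟨ρ, hρS, hρlt⟩ := (csInf_lt_iff S_bddBelow hne1).mp
      (show sInf (S M p fun k => a.1 k - b.1 k) <
        sInf (S M p fun k => a.1 k - b.1 k) + ε / 2 by linarith)
    obtain ⟨σ, hσS, hσlt⟩ := (csInf_lt_iff S_bddBelow hne2).mp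
      (show sInf (S M p fun k => b.1 k - c.1 k) <
        sInf (S M p fun k => b.1 k - c.1 k) + ε / 2 by linarith)
    have hmem := S_add_mem hM hp hρS hσS
    have heq : (fun k => (a.1 k - b.1 k) + (b.1 k - c.1 k)) = fun k => a.1 k - c.1 k := by
      funext k; ring
    rw [heq] at hmem
    have h1 : eta1 M p a.1 c.1 ≤ ρ + σ := csInf_le S_bddBelow hmem
    simp only [eta1_eq] at h1 ⊢
    linarith
  -- point separation
  have hsep : ∀ a b : CpM M p, eta1 M p a.1 b.1 = 0 → a = b := by
    intro a b h
    apply Subtype.ext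
    funext k
    by_contra hk
    have hc : 0 < |a.1 k - b.1 k| := abs_pos.mpr (sub_ne_zero.mpr hk)
    obtain ⟨Xk, hXk, hXs⟩ := exists_X hM ((k : ℝ) + 1)
    have hb := abs_coord_le hM hp (S_nonempty hM hp a.2 b.2) hXk hXs
    rw [← eta1_eq, h, mul_zero] at hb
    linarith
  letI inst : MetricSpace (CpM M p) :=
    { dist := fun a b => eta1 M p a.1 b.1
      dist_self := fun a => eta1_self hM hp a.1
      dist_comm := fun a b => eta1_comm a.1 b.1
      dist_triangle := fun a b c => htri a b c
      eq_of_dist_eq_zero := fun {a b} h => hsep a b h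
      edist_dist := fun a b => rfl }
  refine ⟨inst, fun a b => rfl, ?_⟩
  refine Metric.complete_of_cauchySeq_tendsto fun u hu => ?_
  -- auxiliary: small distance gives cesaroSum bound
  have hSle : ∀ (a b : CpM M p) (ε : ℝ), 0 < ε → dist a b < ε →
      cesaroSum M p (fun k => a.1 k - b.1 k) ε ≤ 1 := by
    intro a b ε hε hd
    have hne := S_nonempty hM hp a.2 b.2
    have hd' : sInf (S M p fun k => a.1 k - b.1 k) < ε := hd
    obtain ⟨ρ, hρS, hρε⟩ := (csInf_lt_iff S_bddBelow hne).mp hd'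
    have hmem := S_mono hM hp0 hρS hρε.le
    exact (rpow_inv_le_one_iff hp0).mp hmem.2
  -- coordinatewise Cauchy
  obtain ⟨X, hXpos, hXspec⟩ :
      ∃ X : ℕ → ℝ, (∀ k, 0 < X k) ∧ ∀ (k : ℕ) (t : ℝ), 0 ≤ t → M t ≤ (k : ℝ) + 1 → t ≤ X k := by
    have h := fun k : ℕ => exists_X hM ((k : ℝ) + 1)
    choose X h1 h2 using h
    exact ⟨X, h1, h2⟩
  have hrate : ∀ m n k, |(u m).1 k - (u n).1 k| ≤ X k * dist (u m) (u n) := by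
    intro m n k
    exact abs_coord_le hM hp (S_nonempty hM hp (u m).2 (u n).2) (hXpos k) (hXspec k)
  have hcauchy : ∀ k, CauchySeq fun n => (u n).1 k := by
    intro k
    rw [Metric.cauchySeq_iff]
    intro ε hε
    obtain ⟨N, hN⟩ := Metric.cauchySeq_iff.mp hu (ε / X k) (div_pos hε (hXpos k))
    refine ⟨N, fun m hm n hn => ?_⟩
    calc dist ((u m).1 k) ((u n).1 k) = |(u m).1 k - (u n).1 k| := Real.dist_eq _ _
      _ ≤ X k * dist (u m) (u n) := hrate m n k
      _ < X k * (ε / X k) := by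
          exact mul_lt_mul_of_pos_left (hN m hm n hn) (hXpos k)
      _ = ε := by
          rw [mul_comm]
          exact div_mul_cancel₀ ε (hXpos k).ne'
  have hlim : ∀ k, ∃ L, Filter.Tendsto (fun n => (u n).1 k) Filter.atTop (nhds L) :=
    fun k => cauchySeq_tendsto_of_complete (hcauchy k)
  choose x hx using hlim
  -- x ∈ CpM
  obtain ⟨N₁, hN₁⟩ := Metric.cauchySeq_iff.mp hu 1 one_pos
  have hone : cesaroSum M p (fun k => (u N₁).1 k - x k) 1 ≤ 1 := by
    refine cesaroSum_le_of_tendsto (dm := fun m k => (u N₁).1 k - (u m).1 k) hM hp0 one_pos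
      (fun k => tendsto_const_nhds.sub (hx k)) ?_
    filter_upwards [Filter.eventually_ge_atTop N₁] with m hm
    exact hSle (u N₁) (u m) 1 one_pos (hN₁ N₁ le_rfl m hm)
  have hxmem : x ∈ CpM M p := by
    obtain ⟨ρ₀, hρ₀, hfin₀⟩ := (u N₁).2
    have h1 : cesaroSum M p (fun k => x k - (u N₁).1 k) 1 ≤ 1 := by
      rwa [cesaroSum_congr (fun k => abs_sub_comm (x k) ((u N₁).1 k)) 1]
    have h2 := cesaroSum_add_lt_top hM hp hρ₀ one_pos hfin₀
      (lt_of_le_of_lt h1 ENNReal.one_lt_top)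
    have heq : (fun k => (u N₁).1 k + (x k - (u N₁).1 k)) = x := by
      funext k; ring
    rw [heq] at h2
    exact ⟨ρ₀ + 1, by linarith, h2⟩
  refine ⟨⟨x, hxmem⟩, ?_⟩
  rw [Metric.tendsto_atTop]
  intro ε hε
  obtain ⟨N, hN⟩ := Metric.cauchySeq_iff.mp hu (ε / 2) (by positivity)
  refine ⟨N, fun n hn => ?_⟩
  have hkey : cesaroSum M p (fun k => (u n).1 k - x k) (ε / 2) ≤ 1 := by
    refine cesaroSum_le_of_tendsto (dm := fun m k => (u n).1 k - (u m).1 k) hM hp0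
      (by positivity) (fun k => tendsto_const_nhds.sub (hx k)) ?_
    filter_upwards [Filter.eventually_ge_atTop N] with m hm
    exact hSle (u n) (u m) (ε / 2) (by positivity) (hN n hn m hm)
  have hmem : ε / 2 ∈ S M p (fun k => (u n).1 k - x k) :=
    ⟨by positivity, (rpow_inv_le_one_iff hp0).mpr hkey⟩
  have hle : dist (u n) (⟨x, hxmem⟩ : CpM M p) ≤ ε / 2 := csInf_le S_bddBelow hmem
  linarith
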